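/- Let b ∈ (0,1), μ₀ > 0, σ₀ < 0, r > 0, and let θ ∈ ℝ satisfy cos²θ > (σ₀² r + b μ₀)/(−σ₀ b μ₀ r). Then the 2×2 symmetric matrix ĝ(θ) with entries ĝ₁₁ = 1/σ₀ + r cos²θ, ĝ₁₂ = ĝ₂₁ = −(σ₀/μ₀) r cos θ, ĝ₂₂ = b/μ₀ + σ₀² r/μ₀² is positive definite; in particular ĝ₁₁ > 0, ĝ₂₂ > 0, and det ĝ = b/(σ₀ μ₀) + (b r/μ₀) cos²θ + σ₀ r/μ₀² > 0. -/

import Mathlib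

/-!
Statement 10: positive definiteness of the controlled mass matrix of the
inverted pendulum cart when `cos²θ > (σ₀² r + b μ₀)/(−σ₀ b μ₀ r)`.
-/

open Real Set Matrix

lemma posDef_fin_two_aux {a c d : ℝ} (ha : 0 < a) (hdet : 0 < a * d - c ^ 2) :
    (!![a, c; c, d]).PosDef := by
  rw [Matrix.posDef_iff_dotProduct_mulVec]
  constructor
  · ext i j
    fin_cases i <;> fin_cases j <;>
      simp [Matrix.conjTranspose, Matrix.transpose]
  · intro x hx
    have hx' : x 0 ≠ 0 ∨ x 1 ≠ 0 := by
      by_contra h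
      push_neg at h
      exact hx (funext fun i => by fin_cases i <;> simp [h.1, h.2])
    simp only [Matrix.mulVec, dotProduct, Fin.sum_univ_two, Fin.isValue,
      Matrix.cons_val', Matrix.cons_val_zero, Matrix.cons_val_one,
      Matrix.head_cons, Matrix.empty_val', Matrix.cons_val_fin_one,
      Matrix.head_fin_const, Matrix.of_apply, RCLike.star_def, starRingEnd_apply,
      star_trivial, RCLike.re_to_real, Pi.star_apply]
    have hd : 0 < d := by nlinarith [sq_nonneg c]
    rcases hx' with h | h
    · nlinarith [sq_nonneg (c * x 0 + d * x 1), mul_pos hdet (mul_self_pos.mpr h), hd]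
    · nlinarith [sq_nonneg (a * x 0 + c * x 1), mul_pos hdet (mul_self_pos.mpr h)]

theorem statement10 (b μ₀ σ₀ r θ : ℝ) (hb : b ∈ Ioo (0 : ℝ) 1)
    (hμ₀ : 0 < μ₀) (hσ₀ : σ₀ < 0) (hr : 0 < r)
    (hθ : Real.cos θ ^ 2 > (σ₀ ^ 2 * r + b * μ₀) / (-σ₀ * b * μ₀ * r)) :
    (!![1 / σ₀ + r * Real.cos θ ^ 2, -(σ₀ / μ₀) * r * Real.cos θ;
        -(σ₀ / μ₀) * r * Real.cos θ, b / μ₀ + σ₀ ^ 2 * r / μ₀ ^ 2]).PosDef ∧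
    0 < 1 / σ₀ + r * Real.cos θ ^ 2 ∧
    0 < b / μ₀ + σ₀ ^ 2 * r / μ₀ ^ 2 ∧
    (!![1 / σ₀ + r * Real.cos θ ^ 2, -(σ₀ / μ₀) * r * Real.cos θ;
        -(σ₀ / μ₀) * r * Real.cos θ, b / μ₀ + σ₀ ^ 2 * r / μ₀ ^ 2]).det
      = b / (σ₀ * μ₀) + (b * r / μ₀) * Real.cos θ ^ 2 + σ₀ * r / μ₀ ^ 2 ∧
    0 < b / (σ₀ * μ₀) + (b * r / μ₀) * Real.cos θ ^ 2 + σ₀ * r / μ₀ ^ 2 := by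
  obtain ⟨hb0, hb1⟩ := hb
  have hσne : σ₀ ≠ 0 := ne_of_lt hσ₀
  have hμne : μ₀ ≠ 0 := ne_of_gt hμ₀
  have hden : 0 < -σ₀ * b * μ₀ * r :=
    mul_pos (mul_pos (mul_pos (neg_pos.mpr hσ₀) hb0) hμ₀) hr
  have hkey : (σ₀ ^ 2 * r + b * μ₀) < Real.cos θ ^ 2 * (-σ₀ * b * μ₀ * r) :=
    (div_lt_iff₀ hden).mp hθ
  have hσμ : σ₀ * μ₀ ^ 2 < 0 := mul_neg_of_neg_of_pos hσ₀ (by positivity)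
  have h11 : 0 < 1 / σ₀ + r * Real.cos θ ^ 2 := by
    have h1 : 1 / σ₀ + r * Real.cos θ ^ 2
        = (1 + r * Real.cos θ ^ 2 * σ₀) / σ₀ := by field_simp
    rw [h1]
    apply div_pos_of_neg_of_neg _ hσ₀
    nlinarith [mul_pos hb0 hμ₀, mul_nonneg (sq_nonneg σ₀) hr.le]
  have h22 : 0 < b / μ₀ + σ₀ ^ 2 * r / μ₀ ^ 2 := by positivity
  have hdet : (!![1 / σ₀ + r * Real.cos θ ^ 2, -(σ₀ / μ₀) * r * Real.cos θ;
        -(σ₀ / μ₀) * r * Real.cos θ, b / μ₀ + σ₀ ^ 2 * r / μ₀ ^ 2]).det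
      = b / (σ₀ * μ₀) + (b * r / μ₀) * Real.cos θ ^ 2 + σ₀ * r / μ₀ ^ 2 := by
    rw [Matrix.det_fin_two_of]
    field_simp
    ring
  have hDeq : b / (σ₀ * μ₀) + (b * r / μ₀) * Real.cos θ ^ 2 + σ₀ * r / μ₀ ^ 2
      = (σ₀ ^ 2 * r + b * μ₀ + Real.cos θ ^ 2 * (σ₀ * b * μ₀ * r)) / (σ₀ * μ₀ ^ 2) := by
    field_simp
    ring
  have hDpos : 0 < b / (σ₀ * μ₀) + (b * r / μ₀) * Real.cos θ ^ 2 + σ₀ * r / μ₀ ^ 2 := by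
    rw [hDeq]
    apply div_pos_of_neg_of_neg _ hσμ
    nlinarith
  refine ⟨?_, h11, h22, hdet, hDpos⟩
  apply posDef_fin_two_aux h11
  have heq : (1 / σ₀ + r * Real.cos θ ^ 2) * (b / μ₀ + σ₀ ^ 2 * r / μ₀ ^ 2)
      - (-(σ₀ / μ₀) * r * Real.cos θ) ^ 2
      = b / (σ₀ * μ₀) + (b * r / μ₀) * Real.cos θ ^ 2 + σ₀ * r / μ₀ ^ 2 := by
    field_simp
    ring
  rw [heq]; exact hDpos
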